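/- Let R be a d×n matrix with nonnegative real entries. The following are equivalent: (i) the entries of R sum to 1 and every nonzero column of R has at least two nonzero entries; (ii) there exists r ∈ (0,1) such that the 2×1 column vector (r, 1−r)ᵀ conditionally majorizes R. -/

import Mathlib

open MeasureTheory
open scoped ENNReal

noncomputable section

/-- Base-2 logarithm. -/
def log2 (x : ℝ) : ℝ := Real.logb 2 x

/-- Base-2 exponential. -/
def exp2 (x : ℝ) : ℝ := (2 : ℝ) ^ x

/-- Rényi entropy of order `α ∈ [0,∞]` of a vector `p` on a finite set. -/
def renyi {X : Type*} [Fintype X] (α : ℝ≥0∞) (p : X → ℝ) : ℝ :=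
  if α = 0 then log2 (Nat.card {x : X // 0 < p x})
  else if α = 1 then -∑ x, p x * log2 (p x)
  else if α = ⊤ then -log2 (⨆ x, p x)
  else (1 - α.toReal)⁻¹ * log2 (∑ x, p x ^ α.toReal)

/-- A probability vector on a finite set. -/
def IsProbVec {X : Type*} [Fintype X] (p : X → ℝ) : Prop :=
  (∀ x, 0 ≤ p x) ∧ ∑ x, p x = 1

/-- A doubly stochastic matrix. -/
def DoublyStochastic {X : Type*} [Fintype X] (S : Matrix X X ℝ) : Prop :=
  (∀ i j, 0 ≤ S i j) ∧ (∀ i, ∑ j, S i j = 1) ∧ (∀ j, ∑ i, S i j = 1)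

/-- `Q` is obtained from `P` by a conditionally mixing channel. -/
def CondMixed {X Y Y' : Type*} [Fintype X] [Fintype Y] [Fintype Y']
    (P : Matrix X Y ℝ) (Q : Matrix X Y' ℝ) : Prop :=
  ∃ (k : ℕ) (S : Fin k → Matrix X X ℝ) (D : Fin k → Matrix Y Y' ℝ),
    (∀ i, DoublyStochastic (S i)) ∧
    (∀ i a b, 0 ≤ D i a b) ∧
    (∀ a, ∑ b, ∑ i, D i a b = 1) ∧
    Q = ∑ i, S i * P * D i

/-- A joint probability distribution on finite alphabets, viewed as a matrix. -/
def IsJointProb {X Y : Type*} [Fintype X] [Fintype Y] (P : Matrix X Y ℝ) : Prop :=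
  (∀ x y, 0 ≤ P x y) ∧ ∑ x, ∑ y, P x y = 1

/-- Marginal on the conditioning system: the `y`-th column sum. -/
def margY {X Y : Type*} [Fintype X] (P : Matrix X Y ℝ) (y : Y) : ℝ := ∑ x, P x y

/-- The conditioned distribution (normalized `y`-th column). -/
def condX {X Y : Type*} [Fintype X] (P : Matrix X Y ℝ) (y : Y) : X → ℝ :=
  fun x => P x y / margY P y

/-- The conditional entropy `H_{t,τ}`. -/
def Hbulk {X Y : Type*} [Fintype X] [Fintype Y] (t : ℝ) (τ : Measure ℝ≥0∞)
    (P : Matrix X Y ℝ) : ℝ :=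
  t⁻¹ * log2 (∑ y ∈ Finset.univ.filter (fun y => 0 < margY P y),
    margY P y * exp2 (t * ∫ α, renyi α (condX P y) ∂τ))

/-- The conditional entropy `H_{0,α}`. -/
def HzeroA {X Y : Type*} [Fintype X] [Fintype Y] (α : ℝ≥0∞) (P : Matrix X Y ℝ) : ℝ :=
  ∑ y ∈ Finset.univ.filter (fun y => 0 < margY P y), margY P y * renyi α (condX P y)

/-- The conditional entropy `H_{-∞,τ}`. -/
def HnegInf {X Y : Type*} [Fintype X] [Fintype Y] (τ : Measure ℝ≥0∞)
    (P : Matrix X Y ℝ) : ℝ :=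
  sInf ((fun y => ∫ α, renyi α (condX P y) ∂τ) '' {y | 0 < margY P y})

/-- The conditional entropy `H_{+∞,0}`. -/
def HposInf {X Y : Type*} [Fintype X] [Fintype Y] (P : Matrix X Y ℝ) : ℝ :=
  sSup ((fun y => renyi 0 (condX P y)) '' {y | 0 < margY P y})

/-- The parameter set `𝒟_bulk`. -/
def Dbulk : Set (ℝ × Measure ℝ≥0∞) :=
  {p | p.1 ≠ 0 ∧ IsProbabilityMeasure p.2 ∧
    ∀ (d n n' : ℕ) (P : Matrix (Fin d) (Fin n) ℝ) (Q : Matrix (Fin d) (Fin n') ℝ),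
      IsJointProb P → CondMixed P Q → Hbulk p.1 p.2 P ≤ Hbulk p.1 p.2 Q}

/-- The parameter set `𝒟_{-∞}`. -/
def DnegInf : Set (Measure ℝ≥0∞) :=
  {τ | IsProbabilityMeasure τ ∧
    ∀ (d n n' : ℕ) (P : Matrix (Fin d) (Fin n) ℝ) (Q : Matrix (Fin d) (Fin n') ℝ),
      IsJointProb P → CondMixed P Q → HnegInf τ P ≤ HnegInf τ Q}

/-- `P'` is obtained from `P` by relabeling (injections) and embedding, with zeros elsewhere. -/
def Embeds {X Y X' Y' : Type*} [Fintype X] [Fintype Y] [Fintype X'] [Fintype Y']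
    (P : Matrix X Y ℝ) (P' : Matrix X' Y' ℝ) : Prop :=
  ∃ (f : X ↪ X') (g : Y ↪ Y'),
    (∀ x y, P' (f x) (g y) = P x y) ∧
    (∀ x' y', P' x' y' ≠ 0 → (∃ x, f x = x') ∧ (∃ y, g y = y'))

/-- Conditional majorization: after a common embedding, a conditionally mixing channel maps
(the embedding of) `P` to (the embedding of) `Q`. -/
def CondMajorizes {X Y X' Y' : Type*} [Fintype X] [Fintype Y] [Fintype X'] [Fintype Y']
    (P : Matrix X Y ℝ) (Q : Matrix X' Y' ℝ) : Prop :=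
  ∃ (m n n' : ℕ) (P' : Matrix (Fin m) (Fin n) ℝ) (Q' : Matrix (Fin m) (Fin n') ℝ),
    Embeds P P' ∧ Embeds Q Q' ∧ CondMixed P' Q'

/-- Kronecker product of matrices. -/
def kron {X Y X' Y' : Type*} (P : Matrix X Y ℝ) (Q : Matrix X' Y' ℝ) :
    Matrix (X × X') (Y × Y') ℝ :=
  Matrix.of fun x y => P x.1 y.1 * Q x.2 y.2

/-- `n`-fold Kronecker power of a matrix. -/
def kronPow {X Y : Type*} (P : Matrix X Y ℝ) (n : ℕ) :
    Matrix (Fin n → X) (Fin n → Y) ℝ :=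
  Matrix.of fun x y => ∏ i, P (x i) (y i)

/-- Sum of all entries of a matrix. -/
def totalMass {X Y : Type*} [Fintype X] [Fintype Y] (P : Matrix X Y ℝ) : ℝ :=
  ∑ x, ∑ y, P x y

/-- `α/(1-α)`, with the convention that it equals `-1` at `α = ∞`. -/
def aRatio (α : ℝ≥0∞) : ℝ := if α = ⊤ then -1 else α.toReal / (1 - α.toReal)

/-- `α/(α-1)`, with the convention that it equals `1` at `α = ∞`. -/
def aRatio' (α : ℝ≥0∞) : ℝ := if α = ⊤ then 1 else α.toReal / (α.toReal - 1)

/-- Rényi relative entropy `D_α(p‖r)`. -/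
def relRenyi {X : Type*} [Fintype X] (α : ℝ≥0∞) (p r : X → ℝ) : ℝ :=
  if α = 1 then ∑ x, p x * log2 (p x / r x)
  else if α = ⊤ then log2 (⨆ x, p x / r x)
  else (α.toReal - 1)⁻¹ * log2 (∑ x, p x ^ α.toReal * r x ^ (1 - α.toReal))

/-- The quantity `I_{t,τ}(P‖R)`. -/
def Ibulk {X Y : Type*} [Fintype X] [Fintype Y] (t : ℝ) (τ : Measure ℝ≥0∞)
    (P : Matrix X Y ℝ) (R : X → ℝ) : ℝ :=
  -t⁻¹ * log2 (∑ y ∈ Finset.univ.filter (fun y => 0 < margY P y),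
    margY P y * exp2 (-t * ∫ α, relRenyi α (condX P y) R ∂τ))

/-- The quantity `I_{-∞,τ}(P‖R)`. -/
def InegInf {X Y : Type*} [Fintype X] [Fintype Y] (τ : Measure ℝ≥0∞)
    (P : Matrix X Y ℝ) (R : X → ℝ) : ℝ :=
  sSup ((fun y => ∫ α, relRenyi α (condX P y) R ∂τ) '' {y | 0 < margY P y})

/-- A conditioned `R`-preserving channel maps `P` to `Q`. -/
def CondPreserving {X Y Y' : Type*} [Fintype X] [Fintype Y] [Fintype Y'] (R : X → ℝ)
    (P : Matrix X Y ℝ) (Q : Matrix X Y' ℝ) : Prop :=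
  ∃ (k : ℕ) (G : Fin k → Matrix X X ℝ) (D : Fin k → Matrix Y Y' ℝ),
    (∀ i a b, 0 ≤ G i a b) ∧
    (∀ i b, ∑ a, G i a b = 1) ∧
    (∀ i, (G i).mulVec R = R) ∧
    (∀ i a b, 0 ≤ D i a b) ∧
    (∀ a, ∑ b, ∑ i, D i a b = 1) ∧
    Q = ∑ i, G i * P * D i

/-- Total variation distance between two matrices. -/
def tvDist {X Y : Type*} [Fintype X] [Fintype Y] (P Q : Matrix X Y ℝ) : ℝ :=
  (1 / 2) * ∑ x, ∑ y, |P x y - Q x y|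

private lemma ite_two_sum {m : ℕ} {a b : Fin m} (hab : a ≠ b) (A B C : ℝ) :
    ∑ y : Fin m, (if y = a then A else if y = b then B else C)
      = A + B + ((m : ℝ) - 2) * C := by
  have h : ∀ y : Fin m, (if y = a then A else if y = b then B else C)
      = C + ((if y = a then A - C else 0) + (if y = b then B - C else 0)) := by
    intro y
    by_cases h1 : y = a
    · subst h1; simp [hab]
    · by_cases h2 : y = b <;> simp [h1, h2, Ne.symm hab]
  rw [Finset.sum_congr rfl fun y _ => h y]
  rw [Finset.sum_add_distrib, Finset.sum_const, Finset.sum_add_distrib,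
    Finset.sum_ite_eq' Finset.univ a, Finset.sum_ite_eq' Finset.univ b]
  simp [Finset.card_univ]
  ring

private lemma sum_mul_ite_two {m : ℕ} {a b : Fin m} (hab : a ≠ b) (M : Fin m → ℝ) (A B : ℝ) :
    ∑ z, M z * (if z = a then A else if z = b then B else 0) = M a * A + M b * B := by
  have h : ∀ z : Fin m, M z * (if z = a then A else if z = b then B else 0)
      = (if z = a then M a * A else 0) + (if z = b then M b * B else 0) := by
    intro z
    by_cases h1 : z = a
    · subst h1; simp [hab]
    · by_cases h2 : z = b <;> simp [h1, h2, Ne.symm hab]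
  rw [Finset.sum_congr rfl fun z _ => h z]
  rw [Finset.sum_add_distrib, Finset.sum_ite_eq' Finset.univ a, Finset.sum_ite_eq' Finset.univ b]
  simp
private lemma exists_DS {m : ℕ} (hm : 3 ≤ m) (a b : Fin m) (hab : a ≠ b)
    (r : ℝ) (hr : 1/2 < r) (hr1 : r < 1)
    (q : Fin m → ℝ) (hq0 : ∀ x, 0 ≤ q x) (hq1 : ∑ x, q x = 1) (hqr : ∀ x, q x ≤ r) :
    ∃ S : Matrix (Fin m) (Fin m) ℝ, DoublyStochastic S ∧
      ∀ x, r * S x a + (1 - r) * S x b = q x := by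
  classical
  have hr0 : (0:ℝ) < r := by linarith
  have h1r : (0:ℝ) < 1 - r := by linarith
  have h2r : (0:ℝ) < 2*r - 1 := by linarith
  set L : Fin m → ℝ := fun x => max 0 (r * (q x - (1 - r)) / (2*r - 1)) with hLdef
  have hL0 : ∀ x, 0 ≤ L x := fun x => le_max_left _ _
  have hLle : ∀ x, r * (q x - (1 - r)) / (2*r - 1) ≤ L x := fun x => le_max_right _ _
  have hLq : ∀ x, L x ≤ q x := by
    intro x
    apply max_le (hq0 x)
    rw [div_le_iff₀ h2r]
    nlinarith [hq0 x, hqr x]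
  have hLsum : ∑ x, L x ≤ r := by
    set T : Finset (Fin m) := Finset.univ.filter (fun x => 1 - r < q x) with hT
    have hzero : ∀ x ∉ T, L x = 0 := by
      intro x hx
      have hqx : q x ≤ 1 - r := by
        by_contra h
        exact hx (Finset.mem_filter.2 ⟨Finset.mem_univ _, lt_of_not_ge h⟩)
      have h' : r * (q x - (1 - r)) / (2*r-1) ≤ 0 := by
        apply div_nonpos_of_nonpos_of_nonneg
        · nlinarith
        · linarith
      exact max_eq_left h'
    rw [← Finset.sum_subset (Finset.subset_univ T) (fun x _ hx => hzero x hx)]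
    have hval : ∀ x ∈ T, L x = (q x - (1 - r)) * (r / (2*r-1)) := by
      intro x hx
      have hqx : 1 - r < q x := (Finset.mem_filter.1 hx).2
      have : L x = r * (q x - (1 - r)) / (2*r - 1) :=
        max_eq_right (div_nonneg (by nlinarith) h2r.le)
      rw [this]; ring
    rw [Finset.sum_congr rfl hval, ← Finset.sum_mul]
    have hTsum : ∑ x ∈ T, (q x - (1-r)) ≤ 2*r - 1 := by
      rcases Nat.lt_or_ge T.card 2 with hc | hc
      · interval_cases h : T.card
        · rw [Finset.card_eq_zero.1 h]; simp; linarith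
        · obtain ⟨x, hx⟩ := Finset.card_eq_one.1 h
          rw [hx, Finset.sum_singleton]
          have := hqr x; linarith
      · have h1 : ∑ x ∈ T, q x ≤ 1 := by
          rw [← hq1]
          exact Finset.sum_le_sum_of_subset_of_nonneg (Finset.subset_univ T)
            (fun x _ _ => hq0 x)
        have h2 : (2:ℝ) ≤ (T.card : ℝ) := by exact_mod_cast hc
        rw [Finset.sum_sub_distrib, Finset.sum_const, nsmul_eq_mul]
        nlinarith
    calc (∑ x ∈ T, (q x - (1-r))) * (r / (2*r-1))
        ≤ (2*r-1) * (r / (2*r-1)) :=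
          mul_le_mul_of_nonneg_right hTsum (by positivity)
      _ = r := by field_simp
  set lam : ℝ := (r - ∑ x, L x) / (1 - ∑ x, L x) with hlamdef
  have hden : 0 < 1 - ∑ x, L x := by linarith
  have hlam0 : 0 ≤ lam := div_nonneg (by linarith) hden.le
  have hlam1 : lam ≤ 1 := (div_le_one hden).2 (by linarith)
  set f : Fin m → ℝ := fun x => L x + lam * (q x - L x) with hfdef
  have hfL : ∀ x, L x ≤ f x := fun x =>
    le_add_of_nonneg_right (mul_nonneg hlam0 (sub_nonneg.2 (hLq x)))
  have hf0 : ∀ x, 0 ≤ f x := fun x => le_trans (hL0 x) (hfL x)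
  have hfq : ∀ x, f x ≤ q x := by
    intro x
    have h1 := hLq x
    simp only [hfdef]
    nlinarith
  have hfsum : ∑ x, f x = r := by
    simp only [hfdef]
    rw [Finset.sum_add_distrib, ← Finset.mul_sum, Finset.sum_sub_distrib, hq1]
    rw [hlamdef, div_mul_cancel₀ _ (ne_of_gt hden)]
    ring
  have hkey : ∀ x, f x / r + (q x - f x) / (1 - r) ≤ 1 := by
    intro x
    have h1 : r * (q x - (1 - r)) / (2*r - 1) ≤ f x := le_trans (hLle x) (hfL x)
    have h2 : r * (q x - (1 - r)) ≤ f x * (2*r - 1) := by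
      rw [div_le_iff₀ h2r] at h1; linarith
    rw [div_add_div _ _ (ne_of_gt hr0) (ne_of_gt h1r), div_le_one (by positivity)]
    nlinarith
  have hmR : (0:ℝ) < (m:ℝ) - 2 := by
    have : (3:ℝ) ≤ (m:ℝ) := by exact_mod_cast hm
    linarith
  refine ⟨Matrix.of fun x y =>
      if y = a then f x / r else if y = b then (q x - f x)/(1-r)
      else (1 - f x / r - (q x - f x)/(1-r))/((m:ℝ)-2), ⟨?_, ?_, ?_⟩, ?_⟩
  · intro x y
    dsimp only [Matrix.of_apply]
    split_ifs
    · exact div_nonneg (hf0 x) hr0.le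
    · exact div_nonneg (by linarith [hfq x]) h1r.le
    · have := hkey x
      apply div_nonneg _ hmR.le
      linarith
  · intro x
    dsimp only [Matrix.of_apply]
    rw [ite_two_sum hab]
    have hne : ((m:ℝ)-2) ≠ 0 := ne_of_gt hmR
    field_simp
    ring
  · intro y
    dsimp only [Matrix.of_apply]
    by_cases h1 : y = a
    · rw [Finset.sum_congr rfl (fun x _ => if_pos h1)]
      rw [← Finset.sum_div, hfsum, div_self (ne_of_gt hr0)]
    · by_cases h2 : y = b
      · rw [Finset.sum_congr rfl (fun x _ => by rw [if_neg h1, if_pos h2])]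
        rw [← Finset.sum_div, Finset.sum_sub_distrib, hq1, hfsum,
          div_self (ne_of_gt h1r)]
      · rw [Finset.sum_congr rfl (fun x _ => by rw [if_neg h1, if_neg h2])]
        rw [← Finset.sum_div]
        rw [div_eq_one_iff_eq (ne_of_gt hmR)]
        rw [Finset.sum_sub_distrib, Finset.sum_sub_distrib, Finset.sum_const,
          nsmul_eq_mul, ← Finset.sum_div, ← Finset.sum_div, hfsum,
          Finset.sum_sub_distrib, hq1, hfsum, div_self (ne_of_gt hr0),
          div_self (ne_of_gt h1r)]
        simp [Finset.card_univ]
        ring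
  · intro x
    dsimp only [Matrix.of_apply]
    rw [if_pos rfl, if_neg (Ne.symm hab), if_pos rfl]
    have h1 : r ≠ 0 := ne_of_gt hr0
    have h2 : (1:ℝ) - r ≠ 0 := ne_of_gt h1r
    field_simp
    ring
private lemma totalMass_embeds {X Y X' Y' : Type*} [Fintype X] [Fintype Y] [Fintype X'] [Fintype Y']
    {P : Matrix X Y ℝ} {P' : Matrix X' Y' ℝ} (h : Embeds P P') :
    totalMass P' = totalMass P := by
  classical
  obtain ⟨f, g, h1, h2⟩ := h
  have e1 : totalMass P' = ∑ p : X' × Y', P' p.1 p.2 :=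
    (Fintype.sum_prod_type (f := fun p : X' × Y' => P' p.1 p.2)).symm
  have e2 : totalMass P = ∑ p : X × Y, P p.1 p.2 :=
    (Fintype.sum_prod_type (f := fun p : X × Y => P p.1 p.2)).symm
  rw [e1, e2]
  have e3 : ∑ p : X' × Y', P' p.1 p.2
      = ∑ p' ∈ Finset.univ.image (fun p : X × Y => (f p.1, g p.2)), P' p'.1 p'.2 := by
    apply (Finset.sum_subset (Finset.subset_univ _) ?_).symm
    intro p' _ hp'
    by_contra hz
    obtain ⟨⟨x, hx⟩, ⟨y, hy⟩⟩ := h2 p'.1 p'.2 hz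
    exact hp' (Finset.mem_image.2 ⟨(x, y), Finset.mem_univ _, by simp [hx, hy]⟩)
  rw [e3, Finset.sum_image]
  · exact Finset.sum_congr rfl fun p _ => h1 p.1 p.2
  · intro p₁ _ p₂ _ hp
    have hx := f.injective (congrArg Prod.fst hp)
    have hy := g.injective (congrArg Prod.snd hp)
    exact Prod.ext hx hy

private lemma totalMass_mul {X Y Z : Type*} [Fintype X] [Fintype Y] [Fintype Z]
    (A : Matrix X Y ℝ) (B : Matrix Y Z ℝ) :
    totalMass (A * B) = ∑ y, (∑ x, A x y) * (∑ z, B y z) := by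
  simp only [totalMass, Matrix.mul_apply, Finset.sum_mul, Finset.mul_sum]
  have h : ∀ x, ∑ z : Z, ∑ y : Y, A x y * B y z = ∑ y : Y, ∑ z : Z, A x y * B y z :=
    fun x => Finset.sum_comm
  simp_rw [h]
  exact (Finset.sum_comm (s := Finset.univ) (t := Finset.univ)
      (f := fun x y => ∑ z : Z, A x y * B y z)).trans
    (Finset.sum_congr rfl fun y _ => Finset.sum_comm)

private lemma totalMass_condMixed {X Y Y' : Type*} [Fintype X] [Fintype Y] [Fintype Y']
    {P : Matrix X Y ℝ} {Q : Matrix X Y' ℝ} (h : CondMixed P Q) :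
    totalMass Q = totalMass P := by
  obtain ⟨k, S, D, hS, hD0, hD1, hQ⟩ := h
  have hsplit : totalMass Q = ∑ i, totalMass (S i * P * D i) := by
    rw [hQ]
    simp only [totalMass, Matrix.sum_apply]
    rw [Finset.sum_congr rfl fun x (_ : x ∈ Finset.univ) =>
      (Finset.sum_comm (s := Finset.univ) (t := Finset.univ)
        (f := fun b i => (S i * P * D i) x b))]
    exact Finset.sum_comm (s := Finset.univ) (t := Finset.univ)
      (f := fun x i => ∑ b, (S i * P * D i) x b)
  have hcolsum : ∀ i y, ∑ x, (S i * P) x y = ∑ z, P z y := by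
    intro i y
    simp only [Matrix.mul_apply]
    rw [Finset.sum_comm]
    refine Finset.sum_congr rfl fun z _ => ?_
    rw [← Finset.sum_mul, (hS i).2.2 z, one_mul]
  rw [hsplit]
  calc ∑ i, totalMass (S i * P * D i)
      = ∑ i, ∑ y, (∑ z, P z y) * (∑ b, D i y b) := by
        refine Finset.sum_congr rfl fun i _ => ?_
        rw [totalMass_mul]
        exact Finset.sum_congr rfl fun y _ => by rw [hcolsum i y]
    _ = ∑ y, (∑ z, P z y) * (∑ i, ∑ b, D i y b) := by
        rw [Finset.sum_comm]
        exact Finset.sum_congr rfl fun y _ => by rw [Finset.mul_sum]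
    _ = ∑ y, (∑ z, P z y) * 1 := by
        refine Finset.sum_congr rfl fun y _ => ?_
        rw [Finset.sum_comm, hD1 y]
    _ = totalMass P := by
        simp only [mul_one, totalMass]
        exact Finset.sum_comm

private lemma nonneg_of_embeds {X Y X' Y' : Type*} [Fintype X] [Fintype Y] [Fintype X'] [Fintype Y']
    {P : Matrix X Y ℝ} {P' : Matrix X' Y' ℝ} (h : Embeds P P') (hP : ∀ x y, 0 ≤ P x y) :
    ∀ x' y', 0 ≤ P' x' y' := by
  obtain ⟨f, g, h1, h2⟩ := h
  intro x' y'
  by_cases hz : P' x' y' = 0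
  · rw [hz]
  · obtain ⟨⟨x, hx⟩, ⟨y, hy⟩⟩ := h2 x' y' hz
    rw [← hx, ← hy, h1]
    exact hP x y

/-- Characterization of power universal elements: a nonnegative `d×n` matrix
`R` has total mass `1` and every nonzero column of `R` has at least two nonzero entries if and
only if there is `r ∈ (0,1)` such that the column vector `(r, 1-r)ᵀ` conditionally
majorizes `R`. -/
theorem power_universal_characterization (d n : ℕ)
    (R : Matrix (Fin d) (Fin n) ℝ) (hR : ∀ i j, 0 ≤ R i j) :
    (totalMass R = 1 ∧
      ∀ j, (∃ i, R i j ≠ 0) → ∃ i₁ i₂, i₁ ≠ i₂ ∧ R i₁ j ≠ 0 ∧ R i₂ j ≠ 0) ↔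
    (∃ r : ℝ, r ∈ Set.Ioo (0 : ℝ) 1 ∧
      CondMajorizes
        (Matrix.of fun (i : Fin 2) (_ : Fin 1) => if i = 0 then r else 1 - r) R) := by
  classical
  constructor
  · rintro ⟨hmass, hcol⟩
    have hd : 0 < d := by
      rcases Nat.eq_zero_or_pos d with h | h
      · subst h; simp [totalMass] at hmass
      · exact h
    have hn : 0 < n := by
      rcases Nat.eq_zero_or_pos n with h | h
      · subst h; simp [totalMass] at hmass
      · exact h
    set w : Fin n → ℝ := fun j => ∑ i, R i j with hwdef
    have hw0 : ∀ j, 0 ≤ w j := fun j => Finset.sum_nonneg fun i _ => hR i j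
    have hwsum : ∑ j, w j = 1 := by
      rw [← hmass, totalMass]; exact Finset.sum_comm
    have hcolzero : ∀ j, w j = 0 → ∀ i, R i j = 0 := by
      intro j hj i
      exact (Finset.sum_eq_zero_iff_of_nonneg (fun i _ => hR i j)).1 hj i (Finset.mem_univ i)
    have hstrict : ∀ j i, 0 < w j → R i j < w j := by
      intro j i hwj
      obtain ⟨i', hi'⟩ : ∃ i', R i' j ≠ 0 := by
        by_contra h
        push_neg at h
        have hz : w j = 0 := Finset.sum_eq_zero fun i _ => h i
        exact (ne_of_gt hwj) hz
      obtain ⟨i₁, i₂, h12, h1, h2⟩ := hcol j ⟨i', hi'⟩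
      obtain ⟨i'', hne, hpos⟩ : ∃ i'', i'' ≠ i ∧ 0 < R i'' j := by
        by_cases hcase : i₁ = i
        · exact ⟨i₂, by rw [← hcase]; exact (Ne.symm h12), lt_of_le_of_ne (hR i₂ j) (Ne.symm h2)⟩
        · exact ⟨i₁, hcase, lt_of_le_of_ne (hR i₁ j) (Ne.symm h1)⟩
      have hle : R i j + R i'' j ≤ w j := by
        have hsub := Finset.sum_le_sum_of_subset_of_nonneg
          (Finset.subset_univ ({i, i''} : Finset (Fin d))) (fun k _ _ => hR k j)
        rwa [Finset.sum_pair (Ne.symm hne)] at hsub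
      linarith
    -- choice of r
    have hne : (Finset.univ : Finset (Fin d × Fin n)).Nonempty :=
      ⟨(⟨0, hd⟩, ⟨0, hn⟩), Finset.mem_univ _⟩
    set c := Finset.sup' Finset.univ hne (fun p : Fin d × Fin n => R p.1 p.2 / w p.2) with hcdef
    have hc1 : c < 1 := by
      rw [hcdef, Finset.sup'_lt_iff]
      intro p _
      by_cases h : w p.2 = 0
      · rw [hcolzero p.2 h p.1, h]; norm_num
      · have hwp : 0 < w p.2 := lt_of_le_of_ne (hw0 _) (Ne.symm h)
        rw [div_lt_one hwp]
        exact hstrict _ _ hwp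
    set r := max (3/4 : ℝ) ((1 + c)/2) with hrdef
    have hr_half : 1/2 < r := lt_of_lt_of_le (by norm_num) (le_max_left _ _)
    have hr1 : r < 1 := max_lt (by norm_num) (by linarith)
    have hcr : c ≤ r := le_trans (by linarith : c ≤ (1+c)/2) (le_max_right _ _)
    have hRr : ∀ i j, R i j ≤ r * w j := by
      intro i j
      by_cases h : w j = 0
      · rw [hcolzero j h i, h]; simp
      · have hwp : 0 < w j := lt_of_le_of_ne (hw0 _) (Ne.symm h)
        have hsup : R i j / w j ≤ c := by
          rw [hcdef]
          exact Finset.le_sup' (fun p : Fin d × Fin n => R p.1 p.2 / w p.2)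
            (Finset.mem_univ (i, j))
        rw [div_le_iff₀ hwp] at hsup
        nlinarith [hw0 j]
    -- the matrices
    set da : Fin (d+2) := ⟨d, by omega⟩ with hdadef
    set db : Fin (d+2) := ⟨d+1, by omega⟩ with hdbdef
    have hdadb : da ≠ db := by
      rw [hdadef, hdbdef]; simp [Fin.ext_iff]
    set P' : Matrix (Fin (d+2)) (Fin 1) ℝ :=
      Matrix.of (fun z _ => if z = da then r else if z = db then 1 - r else 0) with hP'def
    set Q' : Matrix (Fin (d+2)) (Fin n) ℝ :=
      Matrix.of (fun x j => if h : (x : ℕ) < d then R ⟨x, h⟩ j else 0) with hQ'def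
    have hQ'0 : ∀ x j, 0 ≤ Q' x j := by
      intro x j
      rw [hQ'def]
      dsimp only [Matrix.of_apply]
      split
      · exact hR _ _
      · exact le_refl 0
    have hQcol : ∀ j, ∑ x : Fin (d+2), Q' x j = w j := by
      intro j
      have h1 : ∀ i : Fin d, Q' (Fin.castAdd 2 i) j = R i j := by
        intro i
        rw [hQ'def]
        dsimp only [Matrix.of_apply]
        rw [dif_pos (by simp [Fin.coe_castAdd] : ((Fin.castAdd 2 i : Fin (d+2)) : ℕ) < d)]
        exact congrFun (congrArg R (Fin.ext (by simp))) j
      have h2 : ∀ i : Fin 2, Q' (Fin.natAdd d i) j = 0 := by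
        intro i
        rw [hQ'def]
        dsimp only [Matrix.of_apply]
        rw [dif_neg (by simp)]
      rw [Fin.sum_univ_add]
      simp [h1, h2, hwdef]
    have hds1 : DoublyStochastic (1 : Matrix (Fin (d+2)) (Fin (d+2)) ℝ) := by
      refine ⟨fun i j => ?_, fun i => ?_, fun j => ?_⟩
      · rw [Matrix.one_apply]; split <;> norm_num
      · simp [Matrix.one_apply]
      · simp [Matrix.one_apply]
    have hSex : ∀ j : Fin n, ∃ S : Matrix (Fin (d+2)) (Fin (d+2)) ℝ,
        DoublyStochastic S ∧
        ∀ x, (r * S x da + (1 - r) * S x db) * w j = Q' x j := by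
      intro j
      rcases eq_or_lt_of_le (hw0 j) with hwj | hwj
      · refine ⟨1, hds1, fun x => ?_⟩
        rw [← hwj, mul_zero]
        symm
        rw [hQ'def]
        dsimp only [Matrix.of_apply]
        split
        · exact hcolzero j hwj.symm _
        · rfl
      · obtain ⟨S, hSds, hSq⟩ := exists_DS (m := d + 2) (by omega) da db hdadb r hr_half hr1
          (fun x => Q' x j / w j)
          (fun x => div_nonneg (hQ'0 x j) hwj.le)
          (by rw [← Finset.sum_div, hQcol j, div_self (ne_of_gt hwj)])
          (by
            intro x
            rw [div_le_iff₀ hwj]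
            rw [hQ'def]
            dsimp only [Matrix.of_apply]
            split
            · exact hRr _ j
            · positivity)
        refine ⟨S, hSds, fun x => ?_⟩
        rw [hSq x, div_mul_cancel₀ _ (ne_of_gt hwj)]
    choose S hSds hSq using hSex
    set D : Fin n → Matrix (Fin 1) (Fin n) ℝ :=
      fun j => Matrix.of (fun _ b => if b = j then w j else 0) with hDdef
    refine ⟨r, ⟨by linarith, hr1⟩, d+2, 1, n, P', Q', ?_, ?_, n, S, D, hSds, ?_, ?_, ?_⟩
    · -- Embeds p P'
      refine ⟨⟨fun i => if i = 0 then da else db, ?_⟩, Function.Embedding.refl _, ?_, ?_⟩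
      · intro i j hij
        dsimp only at hij
        by_cases h1 : i = 0 <;> by_cases h2 : j = 0
        · rw [h1, h2]
        · rw [if_pos h1, if_neg h2] at hij; exact absurd hij hdadb
        · rw [if_neg h1, if_pos h2] at hij; exact absurd hij.symm hdadb
        · apply Fin.ext
          have hi2 := i.2
          have hj2 := j.2
          have h1' : i.val ≠ 0 := fun hv => h1 (Fin.ext hv)
          have h2' : j.val ≠ 0 := fun hv => h2 (Fin.ext hv)
          omega
      · intro x y
        rw [hP'def]
        dsimp only [Function.Embedding.coeFn_mk, Function.Embedding.refl_apply,
          Matrix.of_apply]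
        by_cases hx : x = 0
        · simp [hx]
          exact fun h => absurd rfl h
        · simp [hx, Ne.symm hdadb]
          obtain rfl : x = 1 := Fin.ext (by
            have hx2 := x.2
            have hx' : x.val ≠ 0 := fun hv => hx (Fin.ext hv)
            show x.val = 1
            omega)
          exact (if_neg (fun h => hdadb h.symm)).trans (if_pos rfl)
      · intro x' y' hz
        refine ⟨?_, ⟨y', rfl⟩⟩
        by_cases h1 : x' = da
        · exact ⟨0, by
            show (if (0:Fin 2) = 0 then da else db) = x'
            rw [if_pos rfl, h1]⟩
        · by_cases h2 : x' = db
          · exact ⟨1, by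
              show (if (1:Fin 2) = 0 then da else db) = x'
              rw [if_neg (by decide : (1 : Fin 2) ≠ 0), h2]⟩
          · exfalso
            apply hz
            rw [hP'def]
            dsimp only [Matrix.of_apply]
            rw [if_neg h1, if_neg h2]
    · -- Embeds R Q'
      refine ⟨⟨fun i => ⟨i.1, by omega⟩, ?_⟩, Function.Embedding.refl _, ?_, ?_⟩
      · intro i j h
        dsimp only at h
        have hv : (i : ℕ) = (j : ℕ) := by
          have hvv := congrArg Fin.val h
          exact hvv
        exact Fin.ext hv
      · intro x y
        rw [hQ'def]
        dsimp only [Matrix.of_apply, Function.Embedding.coeFn_mk]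
        show (if h : (x : ℕ) < d then R ⟨(x : ℕ), h⟩ y else 0) = R x y
        rw [dif_pos x.2]
      · intro x' y' hz
        refine ⟨?_, ⟨y', rfl⟩⟩
        rw [hQ'def] at hz
        dsimp only [Matrix.of_apply] at hz
        by_cases h : (x' : ℕ) < d
        · exact ⟨⟨x'.1, h⟩, Fin.ext rfl⟩
        · exfalso; apply hz; rw [dif_neg h]
    · -- D nonneg
      intro i a b
      rw [hDdef]
      dsimp only [Matrix.of_apply]
      split
      · exact hw0 i
      · exact le_refl 0
    · -- D row sums
      intro a
      rw [hDdef]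
      simp only [Matrix.of_apply]
      rw [Finset.sum_congr rfl fun b (_ : b ∈ Finset.univ) => Finset.sum_ite_eq Finset.univ b w]
      simpa using hwsum
    · -- the matrix identity
      ext x b
      rw [Matrix.sum_apply]
      have hterm : ∀ j : Fin n, (S j * P' * D j) x b
          = if b = j then (r * S j x da + (1 - r) * S j x db) * w j else 0 := by
        intro j
        rw [Matrix.mul_apply, Fin.sum_univ_one, Matrix.mul_apply]
        have hsum : ∑ z, S j x z * P' z 0 = S j x da * r + S j x db * (1 - r) := by
          rw [hP'def]
          dsimp only [Matrix.of_apply]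
          exact sum_mul_ite_two hdadb _ _ _
        rw [hsum, hDdef]
        dsimp only [Matrix.of_apply]
        by_cases hb : b = j
        · rw [if_pos hb, if_pos hb]; ring
        · rw [if_neg hb, if_neg hb, mul_zero]
      rw [Finset.sum_congr rfl fun j _ => hterm j, Finset.sum_ite_eq]
      simp only [Finset.mem_univ, if_true]
      exact (hSq b x).symm
  · rintro ⟨r, ⟨hr0, hr1⟩, m, n₁, n', P', Q', hEP, hEQ, hCM⟩
    have hp0 : ∀ (x : Fin 2) (y : Fin 1),
        0 ≤ (Matrix.of fun (i : Fin 2) (_ : Fin 1) => if i = 0 then r else 1 - r) x y := by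
      intro x y
      dsimp only [Matrix.of_apply]
      split <;> linarith
    have hP'0 : ∀ x y, 0 ≤ P' x y := nonneg_of_embeds hEP hp0
    have hpmass : totalMass
        (Matrix.of fun (i : Fin 2) (_ : Fin 1) => if i = 0 then r else 1 - r) = 1 := by
      simp [totalMass, Fin.sum_univ_two]
    have hmassR : totalMass R = 1 := by
      rw [← totalMass_embeds hEQ, totalMass_condMixed hCM, totalMass_embeds hEP, hpmass]
    refine ⟨hmassR, ?_⟩
    intro j hj
    by_contra hcon
    push_neg at hcon
    obtain ⟨i₀, hi₀⟩ := hj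
    have huniq : ∀ i, i ≠ i₀ → R i j = 0 := fun i hi =>
      hcon i₀ i (fun h => hi h.symm) hi₀
    obtain ⟨fq, gq, hq1, hq2⟩ := hEQ
    obtain ⟨fp, gp, hp1, hp2⟩ := hEP
    obtain ⟨k, S, D, hS, hD0, hD1, hQeq⟩ := hCM
    set a₀ := fq i₀ with ha₀
    set b₀ := gq j with hb₀
    have hw : 0 < R i₀ j := lt_of_le_of_ne (hR i₀ j) (Ne.symm hi₀)
    have hQcol : ∀ x, x ≠ a₀ → Q' x b₀ = 0 := by
      intro x hx
      by_contra hz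
      obtain ⟨⟨i, hi⟩, ⟨j', hj'⟩⟩ := hq2 x b₀ hz
      have hj'' : j' = j := gq.injective hj'
      subst hj''
      rw [← hi, hq1] at hz
      rcases eq_or_ne i i₀ with hii | hii
      · subst hii; exact hx hi.symm
      · exact hz (huniq i hii)
    have hQa : Q' a₀ b₀ = R i₀ j := hq1 i₀ j
    have hSP0 : ∀ i x y, 0 ≤ (S i * P') x y := by
      intro i x y
      rw [Matrix.mul_apply]
      exact Finset.sum_nonneg fun z _ => mul_nonneg ((hS i).1 x z) (hP'0 z y)
    have hexp : ∀ x b, Q' x b = ∑ i, ∑ y, (S i * P') x y * D i y b := by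
      intro x b
      rw [hQeq, Matrix.sum_apply]
      exact Finset.sum_congr rfl fun i _ => Matrix.mul_apply
    have hterm0 : ∀ x, x ≠ a₀ → ∀ i y, (S i * P') x y * D i y b₀ = 0 := by
      intro x hx i y
      have hsum0 : ∑ i, ∑ y, (S i * P') x y * D i y b₀ = 0 := by
        rw [← hexp]; exact hQcol x hx
      have hnn : ∀ i ∈ Finset.univ, 0 ≤ ∑ y, (S i * P') x y * D i y b₀ :=
        fun i _ => Finset.sum_nonneg fun y _ => mul_nonneg (hSP0 i x y) (hD0 i y b₀)
      have h1 := (Finset.sum_eq_zero_iff_of_nonneg hnn).1 hsum0 i (Finset.mem_univ i)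
      have hnn2 : ∀ y ∈ Finset.univ, 0 ≤ (S i * P') x y * D i y b₀ :=
        fun y _ => mul_nonneg (hSP0 i x y) (hD0 i y b₀)
      exact (Finset.sum_eq_zero_iff_of_nonneg hnn2).1 h1 y (Finset.mem_univ y)
    have hpos : 0 < ∑ i, ∑ y, (S i * P') a₀ y * D i y b₀ := by
      rw [← hexp, hQa]; exact hw
    obtain ⟨i₁, y₀, hpos1⟩ : ∃ i y, 0 < (S i * P') a₀ y * D i y b₀ := by
      by_contra hc
      push_neg at hc
      have : ∑ i, ∑ y, (S i * P') a₀ y * D i y b₀ ≤ 0 :=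
        Finset.sum_nonpos fun i _ => Finset.sum_nonpos fun y _ => hc i y
      linarith
    have hDpos : 0 < D i₁ y₀ b₀ := by
      rcases mul_pos_iff.1 hpos1 with ⟨_, h⟩ | ⟨h, _⟩
      · exact h
      · exact absurd h (not_lt.2 (hSP0 i₁ a₀ y₀))
    have hSPpos : 0 < (S i₁ * P') a₀ y₀ := by
      rcases mul_pos_iff.1 hpos1 with ⟨h, _⟩ | ⟨_, h⟩
      · exact h
      · exact absurd h (not_lt.2 (hD0 i₁ y₀ b₀))
    have hcol0 : ∀ x, x ≠ a₀ → (S i₁ * P') x y₀ = 0 := by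
      intro x hx
      rcases mul_eq_zero.1 (hterm0 x hx i₁ y₀) with h | h
      · exact h
      · exact absurd h (ne_of_gt hDpos)
    -- y₀ is in the range of gp
    obtain ⟨z₀, hz₀⟩ : ∃ z, P' z y₀ ≠ 0 := by
      by_contra hc
      push_neg at hc
      rw [Matrix.mul_apply] at hSPpos
      rw [Finset.sum_eq_zero (fun z _ => by rw [hc z, mul_zero])] at hSPpos
      exact lt_irrefl _ hSPpos
    obtain ⟨_, ⟨yy, hyy⟩⟩ := hp2 z₀ y₀ hz₀
    have hfp01 : fp 0 ≠ fp 1 := fun h => by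
      have := fp.injective h
      exact (by decide : (0 : Fin 2) ≠ 1) this
    have hP'col : ∀ z, P' z y₀ = if z = fp 0 then r else if z = fp 1 then 1 - r else 0 := by
      intro z
      by_cases h1 : z = fp 0
      · rw [h1, if_pos rfl, ← hyy, hp1]
        simp
      · by_cases h2 : z = fp 1
        · rw [h2, if_neg (Ne.symm hfp01), if_pos rfl, ← hyy, hp1]
          norm_num
        · rw [if_neg h1, if_neg h2]
          by_contra hz
          obtain ⟨⟨x2, hx2⟩, _⟩ := hp2 z y₀ hz
          fin_cases x2
          · exact h1 hx2.symm
          · exact h2 hx2.symm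
    have hSP : ∀ x, (S i₁ * P') x y₀ = S i₁ x (fp 0) * r + S i₁ x (fp 1) * (1 - r) := by
      intro x
      rw [Matrix.mul_apply]
      rw [Finset.sum_congr rfl fun z _ => by rw [hP'col z]]
      exact sum_mul_ite_two hfp01 _ _ _
    have hS0 : ∀ x, x ≠ a₀ → S i₁ x (fp 0) = 0 ∧ S i₁ x (fp 1) = 0 := by
      intro x hx
      have h := hcol0 x hx
      rw [hSP] at h
      have h1 := (hS i₁).1 x (fp 0)
      have h2 := (hS i₁).1 x (fp 1)
      constructor
      · nlinarith
      · nlinarith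
    have hcolA : S i₁ a₀ (fp 0) = 1 := by
      have := (hS i₁).2.2 (fp 0)
      rw [Finset.sum_eq_single a₀ (fun x _ hx => (hS0 x hx).1) (fun h => absurd (Finset.mem_univ a₀) h)] at this
      exact this
    have hcolB : S i₁ a₀ (fp 1) = 1 := by
      have := (hS i₁).2.2 (fp 1)
      rw [Finset.sum_eq_single a₀ (fun x _ hx => (hS0 x hx).2) (fun h => absurd (Finset.mem_univ a₀) h)] at this
      exact this
    have hrow := (hS i₁).2.1 a₀
    have hge : S i₁ a₀ (fp 0) + S i₁ a₀ (fp 1) ≤ ∑ z, S i₁ a₀ z := by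
      have hsub := Finset.sum_le_sum_of_subset_of_nonneg
        (Finset.subset_univ ({fp 0, fp 1} : Finset (Fin m))) (fun z _ _ => (hS i₁).1 a₀ z)
      rwa [Finset.sum_pair hfp01] at hsub
    rw [hcolA, hcolB, hrow] at hge
    linarith
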